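/- A finite group G is semiabelian if and only if there exists a sequence of finite groups H_1, ..., H_n with H_1 = {1}, H_n = G, and for each i, H_{i+1} = A_i H_i where A_i is a normal abelian subgroup of H_{i+1} and H_i is a proper subgroup of H_{i+1}. -/

import Mathlib

open scoped Pointwise

/-- The minimal family of finite groups containing the trivial group, closed under
semidirect products with finite abelian groups, and closed under quotients. -/
inductive IsSemiabelian : ∀ (G : Type) [Group G], Prop where
  | triv : IsSemiabelian PUnit
  | sdp {A H : Type} [CommGroup A] [Group H] [Finite A] [Finite H]
      (φ : H →* MulAut A) (hH : IsSemiabelian H) : IsSemiabelian (A ⋊[φ] H)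
  | quot {G₁ G₂ : Type} [Group G₁] [Group G₂] [Finite G₁] (f : G₁ →* G₂)
      (hf : Function.Surjective f) (hG : IsSemiabelian G₁) : IsSemiabelian G₂

inductive Good (G : Type) [Group G] : Subgroup G → Prop where
  | bot : Good G ⊥
  | step (K B A : Subgroup G) (hB : Good G B) (hBK : B < K) (hA : A ≤ K)
      (hcomm : IsMulCommutative A)
      (hnorm : ∀ g ∈ K, ∀ a ∈ A, g * a * g⁻¹ ∈ A)
      (hmul : (A : Set G) * (B : Set G) = (K : Set G)) : Good G K

lemma isSemiabelian_of_subsingleton (G : Type) [Group G] [Subsingleton G] :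
    IsSemiabelian G :=
  IsSemiabelian.quot (1 : PUnit →* G) (fun g => ⟨PUnit.unit, Subsingleton.elim _ _⟩)
    IsSemiabelian.triv

lemma good_isSemiabelian {G : Type} [Group G] [Finite G] {K : Subgroup G}
    (h : Good G K) : IsSemiabelian K := by
  induction h with
  | bot => exact isSemiabelian_of_subsingleton _
  | step K B A hB hBK hA hcomm hnorm hmul ih =>
    set A' := A.subgroupOf K with hA'
    set B' := B.subgroupOf K with hB'
    haveI : IsMulCommutative A' := by haveI := hcomm; infer_instance
    haveI : A'.Normal := by
      constructor
      intro a ha g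
      rw [hA', Subgroup.mem_subgroupOf] at ha ⊢
      exact hnorm g g.2 a ha
    letI cG : CommGroup A' :=
      { (inferInstance : Group A') with
        mul_comm := fun a b => ‹IsMulCommutative A'›.is_comm.comm a b }
    have hBsemi : IsSemiabelian B' :=
      IsSemiabelian.quot (Subgroup.subgroupOfEquivOfLe hBK.le).symm.toMonoidHom
        (Subgroup.subgroupOfEquivOfLe hBK.le).symm.surjective ih
    let φ : B' →* MulAut A' := (MulAut.conjNormal).comp B'.subtype
    have hcompat : ∀ g : B', A'.subtype.comp (MulEquiv.toMonoidHom (φ g)) =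
        (MulEquiv.toMonoidHom (MulAut.conj (B'.subtype g))).comp A'.subtype := by
      intro g; ext a; rfl
    let f : A' ⋊[φ] B' →* K := SemidirectProduct.lift A'.subtype B'.subtype hcompat
    have hsurj : Function.Surjective f := by
      rintro ⟨k, hk⟩
      rw [← SetLike.mem_coe, ← hmul] at hk
      obtain ⟨a, ha, b, hb, rfl⟩ := hk
      have haK : a ∈ K := hA ha
      have hbK : b ∈ K := hBK.le hb
      refine ⟨⟨⟨⟨a, haK⟩, by rw [hA', Subgroup.mem_subgroupOf]; exact ha⟩,
        ⟨⟨b, hbK⟩, by rw [hB', Subgroup.mem_subgroupOf]; exact hb⟩⟩, rfl⟩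
    haveI : Finite (A' ⋊[φ] B') :=
      Finite.of_surjective (fun p : A' × B' => (⟨p.1, p.2⟩ : A' ⋊[φ] B'))
        (fun x => ⟨(x.left, x.right), rfl⟩)
    exact IsSemiabelian.quot f hsurj (@IsSemiabelian.sdp A' B' cG _ _ _ φ hBsemi)

lemma good_map {G G' : Type} [Group G] [Group G'] (f : G →* G') {K : Subgroup G}
    (h : Good G K) : Good G' (K.map f) := by
  induction h with
  | bot => rw [Subgroup.map_bot]; exact Good.bot
  | step K B A hB hBK hA hcomm hnorm hmul ih =>
    rcases eq_or_lt_of_le (Subgroup.map_mono (le_of_lt hBK) : B.map f ≤ K.map f) with heq | hlt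
    · rwa [← heq]
    refine Good.step _ _ (A.map f) ih hlt (Subgroup.map_mono hA) ?_ ?_ ?_
    · constructor
      constructor
      rintro ⟨x, hx⟩ ⟨y, hy⟩
      obtain ⟨a, ha, rfl⟩ := hx
      obtain ⟨b, hb, rfl⟩ := hy
      have : a * b = b * a := Subgroup.mul_comm_of_mem_isMulCommutative A ha hb
      ext
      simp only [Subgroup.coe_mul, ← map_mul, this]
    · rintro g hg x hx
      obtain ⟨k, hk, rfl⟩ := hg
      obtain ⟨a, ha, rfl⟩ := hx
      refine ⟨k * a * k⁻¹, hnorm k hk a ha, by simp [map_mul]⟩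
    · rw [Subgroup.coe_map, Subgroup.coe_map, Subgroup.coe_map, ← Set.image_mul, hmul]

lemma isSemiabelian_good (G : Type) [Group G] (h : IsSemiabelian G) :
    Good G ⊤ := by
  induction h with
  | triv =>
    have : (⊤ : Subgroup PUnit) = ⊥ := Subsingleton.elim _ _
    rw [this]; exact Good.bot
  | @sdp A H _ _ _ _ φ hH ih =>
    have hr := good_map (SemidirectProduct.inr (φ := φ)) ih
    rw [← MonoidHom.range_eq_map] at hr
    rcases eq_or_lt_of_le (le_top : SemidirectProduct.inr.range ≤
        (⊤ : Subgroup (A ⋊[φ] H))) with heq | hlt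
    · rwa [← heq]
    haveI : (SemidirectProduct.inl.range : Subgroup (A ⋊[φ] H)).Normal := by
      rw [SemidirectProduct.range_inl_eq_ker_rightHom]; infer_instance
    refine Good.step _ _ SemidirectProduct.inl.range hr hlt le_top ?_ ?_ ?_
    · constructor
      constructor
      rintro ⟨x, hx⟩ ⟨y, hy⟩
      obtain ⟨a, rfl⟩ := hx
      obtain ⟨b, rfl⟩ := hy
      exact Subtype.ext (by simp only [Subgroup.coe_mul, ← map_mul, mul_comm a b])
    · rintro g _ x hx
      exact ‹(SemidirectProduct.inl.range : Subgroup (A ⋊[φ] H)).Normal›.conj_mem x hx g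
    · apply Set.eq_of_subset_of_subset
      · intro x _; trivial
      · rintro x -
        exact ⟨SemidirectProduct.inl x.left, ⟨x.left, rfl⟩,
          SemidirectProduct.inr x.right, ⟨x.right, rfl⟩,
          (SemidirectProduct.inl_left_mul_inr_right x)⟩
  | @quot G₁ G₂ _ _ _ f hf hG ih =>
    have := good_map f ih
    rwa [← MonoidHom.range_eq_map, MonoidHom.range_eq_top.mpr hf] at this

lemma good_of_chain {G : Type} [Group G] {n : ℕ} (H : Fin (n + 1) → Subgroup G)
    (h0 : H 0 = ⊥)
    (hstep : ∀ i : Fin n, H i.castSucc < H i.succ ∧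
      ∃ A : Subgroup G, A ≤ H i.succ ∧ IsMulCommutative A ∧
        (∀ g ∈ H i.succ, ∀ a ∈ A, g * a * g⁻¹ ∈ A) ∧
        (A : Set G) * (H i.castSucc : Set G) = (H i.succ : Set G)) :
    ∀ i, Good G (H i) := by
  intro i
  induction i using Fin.induction with
  | zero => rw [h0]; exact Good.bot
  | succ j ih =>
    obtain ⟨hlt, A, hA, hcomm, hnorm, hmul⟩ := hstep j
    exact Good.step _ _ A ih hlt hA hcomm hnorm hmul

lemma chain_of_good {G : Type} [Group G] {K : Subgroup G} (h : Good G K) :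
    ∃ (n : ℕ) (H : Fin (n + 1) → Subgroup G),
      H 0 = ⊥ ∧ H (Fin.last n) = K ∧
      ∀ i : Fin n, H i.castSucc < H i.succ ∧
        ∃ A : Subgroup G, A ≤ H i.succ ∧ IsMulCommutative A ∧
          (∀ g ∈ H i.succ, ∀ a ∈ A, g * a * g⁻¹ ∈ A) ∧
          (A : Set G) * (H i.castSucc : Set G) = (H i.succ : Set G) := by
  induction h with
  | bot => exact ⟨0, fun _ => ⊥, rfl, rfl, fun i => i.elim0⟩
  | step K B A hB hBK hA hcomm hnorm hmul ih =>
    obtain ⟨n, H, h0, hlast, hstep⟩ := ih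
    refine ⟨n + 1, Fin.snoc H K, ?_, ?_, ?_⟩
    · rw [show (0 : Fin (n + 2)) = Fin.castSucc 0 from rfl, Fin.snoc_castSucc]
      exact h0
    · rw [Fin.snoc_last]
    · intro i
      cases i using Fin.lastCases with
      | last =>
        simp only [Fin.succ_last, Fin.snoc_last, Fin.snoc_castSucc]
        rw [hlast]
        exact ⟨hBK, A, hA, hcomm, hnorm, hmul⟩
      | cast j =>
        simp only [Fin.succ_castSucc, Fin.snoc_castSucc]
        exact hstep j

theorem semiabelian_iff_sequence (G : Type) [Group G] [Finite G] :
    IsSemiabelian G ↔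
      ∃ (n : ℕ) (H : Fin (n + 1) → Subgroup G),
        H 0 = ⊥ ∧ H (Fin.last n) = ⊤ ∧
        ∀ i : Fin n,
          H i.castSucc < H i.succ ∧
          ∃ A : Subgroup G, A ≤ H i.succ ∧ IsMulCommutative A ∧
            (∀ g ∈ H i.succ, ∀ a ∈ A, g * a * g⁻¹ ∈ A) ∧
            (A : Set G) * (H i.castSucc : Set G) = (H i.succ : Set G) := by
  constructor
  · intro h
    exact chain_of_good (isSemiabelian_good G h)
  · rintro ⟨n, H, h0, hlast, hstep⟩
    have hg : Good G ⊤ := by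
      rw [← hlast]; exact good_of_chain H h0 hstep (Fin.last n)
    exact IsSemiabelian.quot (Subgroup.topEquiv (G := G)).toMonoidHom
      (Subgroup.topEquiv (G := G)).surjective (good_isSemiabelian hg)
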